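/- For every p in the upper half-plane ℂ₊, the function u(t,x) = 2·Im(p)/|x - c·t + p|² with c = 1/Im(p) is a solution of the Benjamin–Ono equation ∂ₜu - ∂ₓ|D|u + ∂ₓ(u²) = 0, where |D| = H∂ₓ and H is the Hilbert transform. -/

import Mathlib

open MeasureTheory Filter Set Topology

noncomputable section

/-- The Hilbert transform, defined as a principal value:
`Hf(x) = (1/π) p.v. ∫ f(y)/(x-y) dy`. -/
noncomputable def pvHilbert (f : ℝ → ℝ) (x : ℝ) : ℝ :=
  limUnder (𝓝[>] (0 : ℝ)) fun ε : ℝ =>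
    (1 / Real.pi) * ∫ y in {y : ℝ | ε < |x - y|}, f y / (x - y)

namespace BOaux

variable (p' : ℂ) (x : ℝ)

/-- complex integrand -/
def hC (w : ℝ) : ℂ := 2 / (((w:ℂ)+p')^2 * ((x:ℂ) - w))

/-- antiderivative -/
def FC (w : ℝ) : ℂ := (2/((x:ℂ)+p')^2) * (Complex.log ((w:ℂ)+p') - (Real.log (w - x) : ℂ))
  - (2/((x:ℂ)+p')) * ((w:ℂ)+p')⁻¹

variable {p'} 

lemma ne_zero_add (hb : 0 < p'.im) (w : ℝ) : ((w:ℂ)+p') ≠ 0 := by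
  intro h
  have := congrArg Complex.im h
  simp at this
  exact absurd this hb.ne'

lemma slit_add (hb : 0 < p'.im) (w : ℝ) : ((w:ℂ)+p') ∈ Complex.slitPlane :=
  Or.inr (by simpa using hb.ne')

lemma hasDerivAt_FC (hb : 0 < p'.im) (w : ℝ) (hw : w ≠ x) :
    HasDerivAt (FC p' x) (hC p' x w) w := by
  have hs : ((w:ℂ)+p') ≠ 0 := ne_zero_add hb w
  have hq : ((x:ℂ)+p') ≠ 0 := ne_zero_add hb x
  have hwx' : w - x ≠ 0 := sub_ne_zero.2 hw
  have hwx : (x:ℂ) - w ≠ 0 := by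
    rw [sub_ne_zero]
    exact_mod_cast fun h => hw (by exact_mod_cast h.symm)
  have hwx2 : (w:ℂ) - x ≠ 0 := by
    rw [sub_ne_zero]
    exact_mod_cast fun h => hw (by exact_mod_cast h)
  have hlog : HasDerivAt (fun w : ℝ => Complex.log ((w:ℂ)+p')) ((w:ℂ)+p')⁻¹ w := by
    have h1 : HasDerivAt (fun z : ℂ => Complex.log (z + p')) ((w:ℂ)+p')⁻¹ (w:ℂ) := by
      simpa [Function.comp_def] using (Complex.hasDerivAt_log (slit_add hb w)).comp (w:ℂ)
        ((hasDerivAt_id (w:ℂ)).add_const p')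
    exact h1.comp_ofReal
  have hrlog : HasDerivAt (fun w : ℝ => ((Real.log (w - x) : ℝ) : ℂ)) (((w - x)⁻¹ : ℝ) : ℂ) w := by
    have h1 : HasDerivAt (fun w : ℝ => Real.log (w - x)) ((w - x)⁻¹) w := by
      simpa [Function.comp_def] using (Real.hasDerivAt_log hwx').comp w ((hasDerivAt_id w).sub_const x)
    exact h1.ofReal_comp
  have hinv : HasDerivAt (fun w : ℝ => ((w:ℂ)+p')⁻¹) (-(1 / ((w:ℂ)+p')^2)) w := by
    have h1 : HasDerivAt (fun z : ℂ => (z + p')⁻¹) (-(1 / ((w:ℂ)+p')^2)) (w:ℂ) := by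
      simpa [div_eq_mul_inv, Pi.inv_def] using ((hasDerivAt_id (w:ℂ)).add_const p').inv hs
    exact h1.comp_ofReal
  have := (((hlog.sub hrlog).const_mul (2/((x:ℂ)+p')^2)).sub (hinv.const_mul (2/((x:ℂ)+p'))))
  refine this.congr_deriv ?_
  unfold hC
  push_cast
  field_simp
  ring

lemma integrable_lorentz (A b : ℝ) (hb : 0 < b) :
    Integrable (fun w : ℝ => ((w+A)^2+b^2)⁻¹) := by
  have h1 : Integrable (fun w : ℝ => (1+(w/b)^2)⁻¹) :=
    integrable_inv_one_add_sq.comp_div hb.ne'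
  have h2 : Integrable (fun w : ℝ => (w^2+b^2)⁻¹) := by
    refine (h1.const_mul (b^2)⁻¹).congr (ae_of_all _ fun w => ?_)
    field_simp
    ring
  simpa using h2.comp_add_right A

lemma norm_hC (w : ℝ) : ‖hC p' x w‖ = 2 / ((((w+p'.re)^2+p'.im^2)) * |x - w|) := by
  have h1 : ((x:ℂ) - w) = ((x - w : ℝ) : ℂ) := by push_cast; ring
  rw [hC, norm_div, norm_mul, norm_pow, h1, Complex.norm_real, Real.norm_eq_abs]
  congr 1
  · simp
  · congr 1
    rw [Complex.sq_norm, Complex.normSq_apply]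
    simp
    ring

lemma contOn_hC (hb : 0 < p'.im) {s : Set ℝ} (hs : ∀ w ∈ s, w ≠ x) :
    ContinuousOn (hC p' x) s := by
  apply ContinuousOn.div continuousOn_const
  · fun_prop
  · intro w hw
    exact mul_ne_zero (pow_ne_zero _ (ne_zero_add hb w))
      (by
        rw [sub_ne_zero]
        exact_mod_cast fun h => hs w hw (by exact_mod_cast h.symm))

lemma integrableOn_hC_Ioi (hb : 0 < p'.im) (a₀ : ℝ) (ha : x < a₀) :
    IntegrableOn (hC p' x) (Ioi a₀) := by
  set M := max a₀ (x+1) with hM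
  have hM1 : a₀ ≤ M := le_max_left _ _
  have hsplit : Ioc a₀ M ∪ Ioi M = Ioi a₀ := Ioc_union_Ioi_eq_Ioi hM1
  rw [← hsplit]
  have hcont1 : ContinuousOn (hC p' x) (Icc a₀ M) :=
    contOn_hC (x := x) hb fun w hw => (lt_of_lt_of_le ha hw.1).ne'
  have hcont2 : ContinuousOn (hC p' x) (Ioi M) :=
    contOn_hC (x := x) hb fun w hw =>
      (lt_of_lt_of_le (lt_of_lt_of_le (by linarith) (le_max_right a₀ (x+1))) (le_of_lt hw)).ne'
  apply IntegrableOn.union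
  · exact (hcont1.integrableOn_Icc).mono_set Ioc_subset_Icc_self
  · refine Integrable.mono' (((integrable_lorentz p'.re p'.im hb).const_mul 2).integrableOn)
      (hcont2.aestronglyMeasurable measurableSet_Ioi) ?_
    rw [ae_restrict_iff' measurableSet_Ioi]
    refine ae_of_all _ fun w hw => ?_
    rw [norm_hC]
    have hxw : x + 1 < w := lt_of_le_of_lt (le_max_right a₀ (x+1)) hw
    have h1 : (1:ℝ) ≤ |x - w| := by
      rw [abs_sub_comm, abs_of_pos (by linarith)]
      linarith
    have hden : (0:ℝ) < (w+p'.re)^2+p'.im^2 := by positivity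
    calc 2 / ((((w+p'.re)^2+p'.im^2)) * |x - w|) ≤ 2 / ((((w+p'.re)^2+p'.im^2)) * 1) := by
          gcongr
      _ = 2 * (((w+p'.re)^2+p'.im^2))⁻¹ := by rw [mul_one, div_eq_mul_inv]

lemma integrableOn_hC_Iic (hb : 0 < p'.im) (b₀ : ℝ) (hb₀ : b₀ < x) :
    IntegrableOn (hC p' x) (Iic b₀) := by
  set m := min b₀ (x-1) with hm
  have hm1 : m ≤ b₀ := min_le_left _ _
  have hsplit : Iic m ∪ Ioc m b₀ = Iic b₀ := Iic_union_Ioc_eq_Iic hm1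
  rw [← hsplit]
  have hcont1 : ContinuousOn (hC p' x) (Iic m) :=
    contOn_hC (x := x) hb fun w hw =>
      ne_of_lt (lt_of_le_of_lt (le_trans hw (min_le_right _ _)) (by linarith))
  have hcont2 : ContinuousOn (hC p' x) (Icc m b₀) :=
    contOn_hC (x := x) hb fun w hw => (lt_of_le_of_lt hw.2 hb₀).ne
  apply IntegrableOn.union
  · refine Integrable.mono' (((integrable_lorentz p'.re p'.im hb).const_mul 2).integrableOn)
      (hcont1.aestronglyMeasurable measurableSet_Iic) ?_
    rw [ae_restrict_iff' measurableSet_Iic]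
    refine ae_of_all _ fun w hw => ?_
    rw [norm_hC]
    have hw1 : w ≤ x - 1 := le_trans hw (min_le_right _ _)
    have h1 : (1:ℝ) ≤ |x - w| := by
      rw [abs_of_pos (by linarith)]
      linarith
    have hden : (0:ℝ) < (w+p'.re)^2+p'.im^2 := by positivity
    calc 2 / ((((w+p'.re)^2+p'.im^2)) * |x - w|) ≤ 2 / ((((w+p'.re)^2+p'.im^2)) * 1) := by
          gcongr
      _ = 2 * (((w+p'.re)^2+p'.im^2))⁻¹ := by rw [mul_one, div_eq_mul_inv]
  · exact (hcont2.integrableOn_Icc).mono_set Ioc_subset_Icc_self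


lemma tendsto_norm_add_atTop (p' : ℂ) : Tendsto (fun w : ℝ => ‖(w:ℂ)+p'‖) atTop atTop := by
  apply tendsto_atTop_mono (fun w => ?_) (tendsto_atTop_add_const_right _ p'.re tendsto_id)
  calc w + p'.re = ((w:ℂ)+p').re := by simp
    _ ≤ ‖(w:ℂ)+p'‖ := Complex.re_le_norm _

lemma tendsto_norm_add_atBot (p' : ℂ) : Tendsto (fun w : ℝ => ‖(w:ℂ)+p'‖) atBot atTop := by
  apply tendsto_atTop_mono (fun w => ?_)
    ((tendsto_atTop_add_const_right _ (-p'.re) tendsto_id).comp tendsto_neg_atBot_atTop)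
  show -w + -p'.re ≤ ‖(w:ℂ)+p'‖
  calc -w + -p'.re = (-((w:ℂ)+p')).re := by simp; ring
    _ ≤ ‖-((w:ℂ)+p')‖ := Complex.re_le_norm _
    _ = ‖(w:ℂ)+p'‖ := norm_neg _

lemma tendsto_inv_add_atTop (p' : ℂ) : Tendsto (fun w : ℝ => ((w:ℂ)+p')⁻¹) atTop (𝓝 0) := by
  rw [tendsto_zero_iff_norm_tendsto_zero]
  simp only [norm_inv]
  exact (tendsto_norm_add_atTop p').inv_tendsto_atTop

lemma tendsto_inv_add_atBot (p' : ℂ) : Tendsto (fun w : ℝ => ((w:ℂ)+p')⁻¹) atBot (𝓝 0) := by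
  rw [tendsto_zero_iff_norm_tendsto_zero]
  simp only [norm_inv]
  exact (tendsto_norm_add_atBot p').inv_tendsto_atTop

lemma tendsto_inv_ofReal_sub (x : ℝ) : Tendsto (fun w : ℝ => ((w:ℂ) - x)⁻¹) atTop (𝓝 0) := by
  have h3 : Tendsto (fun w : ℝ => (w - x)⁻¹) atTop (𝓝 0) :=
    tendsto_inv_atTop_zero.comp (tendsto_atTop_add_const_right _ (-x) tendsto_id)
  have h4 := (Complex.continuous_ofReal.tendsto 0).comp h3
  rw [Complex.ofReal_zero] at h4
  refine h4.congr fun w => ?_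
  simp [Function.comp]

lemma tendsto_logdiff_atTop (hb : 0 < p'.im) :
    Tendsto (fun w : ℝ => Complex.log ((w:ℂ)+p') - (Real.log (w - x) : ℂ)) atTop (𝓝 0) := by
  have key : ∀ᶠ w : ℝ in atTop, Complex.log ((w:ℂ)+p') - (Real.log (w - x) : ℂ)
      = Complex.log (((w:ℂ)+p') / ((w:ℂ) - x)) := by
    filter_upwards [eventually_gt_atTop x] with w hw
    have hr : (0:ℝ) < w - x := by linarith
    have hwx : ((w:ℂ) - x) ≠ 0 := by
      rw [sub_ne_zero]; exact_mod_cast hw.ne'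
    have hz : ((w:ℂ)+p') / ((w:ℂ) - x) ≠ 0 :=
      div_ne_zero (by
        intro h; have := congrArg Complex.im h; simp at this; exact absurd this hb.ne') hwx
    have e : ((w - x : ℝ) : ℂ) * (((w:ℂ)+p') / ((w:ℂ) - x)) = (w:ℂ)+p' := by
      push_cast; field_simp
    have hlm := Complex.log_ofReal_mul hr hz
    rw [e] at hlm
    rw [hlm]; ring
  rw [tendsto_congr' key]
  have h1 : Tendsto (fun w : ℝ => ((w:ℂ)+p') / ((w:ℂ) - x)) atTop (𝓝 1) := by
    have h2 : Tendsto (fun w : ℝ => 1 + ((x:ℂ)+p') * ((w:ℂ) - x)⁻¹) atTop (𝓝 1) := by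
      simpa using ((tendsto_inv_ofReal_sub x).const_mul ((x:ℂ)+p')).const_add 1
    refine h2.congr' ?_
    filter_upwards [eventually_gt_atTop x] with w hw
    have hwx : ((w:ℂ) - x) ≠ 0 := by
      rw [sub_ne_zero]; exact_mod_cast hw.ne'
    field_simp
    ring
  have := h1.clog (by simp [Complex.slitPlane])
  simpa [Complex.log_one] using this

lemma tendsto_inv_ofReal_sub' (x : ℝ) : Tendsto (fun w : ℝ => ((x:ℂ) - w)⁻¹) atBot (𝓝 0) := by
  have h3 : Tendsto (fun w : ℝ => (x - w)⁻¹) atBot (𝓝 0) :=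
    tendsto_inv_atTop_zero.comp (tendsto_atTop_add_const_left _ x tendsto_neg_atBot_atTop)
  have h4 := (Complex.continuous_ofReal.tendsto 0).comp h3
  rw [Complex.ofReal_zero] at h4
  refine h4.congr fun w => ?_
  simp [Function.comp]

lemma tendsto_logdiff_atBot (hb : 0 < p'.im) :
    Tendsto (fun w : ℝ => Complex.log ((w:ℂ)+p') - (Real.log (w - x) : ℂ)) atBot
      (𝓝 (Real.pi * Complex.I)) := by
  have key : ∀ᶠ w : ℝ in atBot, Complex.log ((w:ℂ)+p') - (Real.log (w - x) : ℂ)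
      = Complex.log (((w:ℂ)+p') / ((x:ℂ) - w)) := by
    filter_upwards [eventually_lt_atBot x] with w hw
    have hr : (0:ℝ) < x - w := by linarith
    have hwx : ((x:ℂ) - w) ≠ 0 := by
      rw [sub_ne_zero]; exact_mod_cast hw.ne'
    have hz : ((w:ℂ)+p') / ((x:ℂ) - w) ≠ 0 :=
      div_ne_zero (by
        intro h; have := congrArg Complex.im h; simp at this; exact absurd this hb.ne') hwx
    have e : ((x - w : ℝ) : ℂ) * (((w:ℂ)+p') / ((x:ℂ) - w)) = (w:ℂ)+p' := by
      push_cast; field_simp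
    have hlm := Complex.log_ofReal_mul hr hz
    rw [e] at hlm
    rw [show w - x = -(x - w) by ring, Real.log_neg_eq_log, hlm]
    ring
  rw [tendsto_congr' key]
  have h1 : Tendsto (fun w : ℝ => ((w:ℂ)+p') / ((x:ℂ) - w)) atBot
      (𝓝[{z : ℂ | 0 ≤ z.im}] (-1)) := by
    rw [tendsto_nhdsWithin_iff]
    constructor
    · have h2 : Tendsto (fun w : ℝ => -1 + ((x:ℂ)+p') * ((x:ℂ) - w)⁻¹) atBot (𝓝 (-1)) := by
        simpa using ((tendsto_inv_ofReal_sub' x).const_mul ((x:ℂ)+p')).const_add (-1)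
      refine h2.congr' ?_
      filter_upwards [eventually_lt_atBot x] with w hw
      have hwx : ((x:ℂ) - w) ≠ 0 := by
        rw [sub_ne_zero]; exact_mod_cast hw.ne'
      field_simp
      ring
    · filter_upwards [eventually_lt_atBot x] with w hw
      have hr : (0:ℝ) < x - w := by linarith
      show 0 ≤ (((w:ℂ)+p') / ((x:ℂ) - w)).im
      have : ((x:ℂ) - w) = ((x - w : ℝ) : ℂ) := by push_cast; ring
      rw [this, Complex.div_ofReal_im]
      apply div_nonneg _ hr.le
      simpa using hb.le
  have hcont := Complex.continuousWithinAt_log_of_re_neg_of_im_zero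
    (show (-1 : ℂ).re < 0 by norm_num) (by norm_num)
  have := hcont.tendsto.comp h1
  simpa [Complex.log_neg_one, Function.comp_def] using this


lemma tendsto_FC_atTop (hb : 0 < p'.im) : Tendsto (FC p' x) atTop (𝓝 0) := by
  have := ((tendsto_logdiff_atTop x hb).const_mul (2/((x:ℂ)+p')^2)).sub
    ((tendsto_inv_add_atTop p').const_mul (2/((x:ℂ)+p')))
  unfold FC
  simpa using this

lemma tendsto_FC_atBot (hb : 0 < p'.im) :
    Tendsto (FC p' x) atBot (𝓝 ((2/((x:ℂ)+p')^2) * (Real.pi * Complex.I))) := by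
  have := ((tendsto_logdiff_atBot x hb).const_mul (2/((x:ℂ)+p')^2)).sub
    ((tendsto_inv_add_atBot p').const_mul (2/((x:ℂ)+p')))
  unfold FC
  simpa using this


lemma integral_Ioi_hC (hb : 0 < p'.im) {a₀ : ℝ} (ha : x < a₀) :
    ∫ w in Ioi a₀, hC p' x w = - FC p' x a₀ := by
  have h := integral_Ioi_of_hasDerivAt_of_tendsto' (f := FC p' x) (f' := hC p' x)
    (fun w hw => hasDerivAt_FC x hb w (lt_of_lt_of_le ha hw).ne')
    (integrableOn_hC_Ioi x hb a₀ ha) (tendsto_FC_atTop x hb)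
  rw [h]; ring

lemma integral_Iic_hC (hb : 0 < p'.im) {b₀ : ℝ} (hb₀ : b₀ < x) :
    ∫ w in Iic b₀, hC p' x w
      = FC p' x b₀ - (2/((x:ℂ)+p')^2) * (Real.pi * Complex.I) := by
  exact integral_Iic_of_hasDerivAt_of_tendsto'
    (fun w hw => hasDerivAt_FC x hb w (lt_of_le_of_lt hw hb₀).ne)
    (integrableOn_hC_Iic x hb b₀ hb₀) (tendsto_FC_atBot x hb)

lemma truncSet_eq (ε : ℝ) (hε : 0 < ε) :
    {y : ℝ | ε < |x - y|} = Iio (x - ε) ∪ Ioi (x + ε) := by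
  ext y
  simp only [mem_setOf_eq, mem_union, mem_Iio, mem_Ioi]
  rw [lt_abs]
  constructor
  · rintro (h | h)
    · left; linarith
    · right; simp at h; linarith
  · rintro (h | h)
    · left; linarith
    · right; simp; linarith

lemma integral_trunc (hb : 0 < p'.im) (ε : ℝ) (hε : 0 < ε) :
    ∫ y in {y : ℝ | ε < |x - y|}, hC p' x y
      = FC p' x (x - ε) - FC p' x (x + ε)
        - (2/((x:ℂ)+p')^2) * (Real.pi * Complex.I) := by
  rw [truncSet_eq x ε hε]
  rw [setIntegral_union (by
      rw [Set.disjoint_left]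
      intro y h1 h2
      simp at h1 h2
      linarith) measurableSet_Ioi
    ((integrableOn_hC_Iic x hb (x - ε) (by linarith)).mono_set Iio_subset_Iic_self)
    (integrableOn_hC_Ioi x hb (x + ε) (by linarith))]
  rw [setIntegral_congr_set Iio_ae_eq_Iic]
  rw [integral_Iic_hC x hb (by linarith : x - ε < x),
    integral_Ioi_hC x hb (by linarith : x < x + ε)]
  ring


set_option maxHeartbeats 1000000 in
lemma im_hC (p' : ℂ) (hb : 0 < p'.im) (x w : ℝ) (hw : w ≠ x) :
    (hC p' x w).im
      = (-4*p'.im*(w+p'.re)/(((w+p'.re)^2+p'.im^2)^2)) / (x - w) := by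
  have hs : ((w:ℂ)+p') ≠ 0 := ne_zero_add hb w
  rw [hC]
  have hxw : x - w ≠ 0 := sub_ne_zero.2 (fun h => hw h.symm)
  have hden : ((w+p'.re)^2+p'.im^2) ≠ 0 := by positivity
  have hxwc : ((x:ℂ) - w) ≠ 0 := by
    rw [sub_ne_zero]; exact_mod_cast fun h => hw ((by exact_mod_cast h : (x:ℝ) = w)).symm
  have hne : (((w:ℂ)+p')^2 * ((x:ℂ) - w)) ≠ 0 := mul_ne_zero (pow_ne_zero _ hs) hxwc
  have hdenr : (((w+p'.re)^2+p'.im^2)^2 * (x - w)) ≠ 0 := mul_ne_zero (pow_ne_zero _ hden) hxw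
  have hdenc : (((((w+p'.re)^2+p'.im^2)^2 * (x - w)) : ℝ) : ℂ) ≠ 0 := by exact_mod_cast hdenr
  have key : (2:ℂ) / (((w:ℂ)+p')^2 * ((x:ℂ) - w))
      = (((2*((w+p'.re)^2-p'.im^2) : ℝ) : ℂ) + ((-(4*p'.im*(w+p'.re)) : ℝ) : ℂ) * Complex.I)
        / (((((w+p'.re)^2+p'.im^2)^2 * (x - w)) : ℝ) : ℂ) := by
    rw [div_eq_div_iff hne hdenc]
    have hs2 : ((w:ℂ)+p') = ((w + p'.re : ℝ):ℂ) + ((p'.im:ℝ):ℂ)*Complex.I := by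
      apply Complex.ext <;> simp
    rw [hs2]
    apply Complex.ext <;>
      simp only [Complex.mul_re, Complex.mul_im, Complex.add_re, Complex.add_im, Complex.sub_re,
        Complex.sub_im, Complex.ofReal_re, Complex.ofReal_im, Complex.I_re, Complex.I_im,
        Complex.ofReal_mul, Complex.ofReal_add, Complex.ofReal_pow, Complex.ofReal_sub,
        Complex.ofReal_neg, Complex.neg_re, Complex.neg_im, pow_two, Complex.ofReal_ofNat,
        Complex.re_ofNat, Complex.im_ofNat] <;>
      ring
  rw [key, Complex.div_ofReal_im]
  simp only [Complex.add_im, Complex.ofReal_im, Complex.mul_im, Complex.ofReal_re, Complex.I_im,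
    Complex.I_re, mul_zero, zero_add, mul_one, zero_mul, add_zero]
  field_simp

lemma tendsto_integral_trunc (hb : 0 < p'.im) :
    Tendsto (fun ε : ℝ => ∫ y in {y : ℝ | ε < |x - y|}, hC p' x y) (𝓝[>] 0)
      (𝓝 (-((2/((x:ℂ)+p')^2) * (Real.pi * Complex.I)))) := by
  have hq : ((x:ℂ)+p') ≠ 0 := ne_zero_add hb x
  set G : ℝ → ℂ := fun ε =>
    (2/((x:ℂ)+p')^2) * (Complex.log (((x - ε : ℝ):ℂ)+p') - Complex.log (((x + ε : ℝ):ℂ)+p'))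
    - (2/((x:ℂ)+p')) * ((((x - ε : ℝ):ℂ)+p')⁻¹ - (((x + ε : ℝ):ℂ)+p')⁻¹)
    - (2/((x:ℂ)+p')^2) * (Real.pi * Complex.I) with hG
  have hkey : ∀ᶠ ε in 𝓝[>] (0:ℝ), G ε = ∫ y in {y : ℝ | ε < |x - y|}, hC p' x y := by
    filter_upwards [self_mem_nhdsWithin] with ε (hε : 0 < ε)
    rw [integral_trunc x hb ε hε, hG]
    simp only [FC]
    rw [show x - ε - x = -ε by ring, show x + ε - x = ε by ring, Real.log_neg_eq_log]
    ring
  have hcont : Tendsto G (𝓝[>] (0:ℝ)) (𝓝 (-((2/((x:ℂ)+p')^2) * (Real.pi * Complex.I)))) := by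
    have c1 : ContinuousAt (fun ε : ℝ => (((x - ε : ℝ):ℂ)+p')) 0 := by fun_prop
    have c2 : ContinuousAt (fun ε : ℝ => (((x + ε : ℝ):ℂ)+p')) 0 := by fun_prop
    have hv1 : (((x - (0:ℝ) : ℝ):ℂ)+p') = (x:ℂ)+p' := by norm_num
    have hv2 : (((x + (0:ℝ) : ℝ):ℂ)+p') = (x:ℂ)+p' := by norm_num
    have l1 : ContinuousAt (fun ε : ℝ => Complex.log (((x - ε : ℝ):ℂ)+p')) 0 := by
      refine c1.clog ?_
      rw [hv1]; exact slit_add hb x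
    have l2 : ContinuousAt (fun ε : ℝ => Complex.log (((x + ε : ℝ):ℂ)+p')) 0 := by
      refine c2.clog ?_
      rw [hv2]; exact slit_add hb x
    have i1 : ContinuousAt (fun ε : ℝ => ((((x - ε : ℝ):ℂ)+p')⁻¹)) 0 := by
      refine c1.inv₀ ?_
      rw [hv1]; exact ne_zero_add hb x
    have i2 : ContinuousAt (fun ε : ℝ => ((((x + ε : ℝ):ℂ)+p')⁻¹)) 0 := by
      refine c2.inv₀ ?_
      rw [hv2]; exact ne_zero_add hb x
    have hGc : ContinuousAt G 0 := by
      apply ContinuousAt.sub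
      apply ContinuousAt.sub
      · exact (l1.sub l2).const_mul _
      · exact (i1.sub i2).const_mul _
      · exact continuousAt_const
    have hG0 : G 0 = -((2/((x:ℂ)+p')^2) * (Real.pi * Complex.I)) := by
      rw [hG]
      simp only
      rw [hv1, hv2]
      ring
    rw [← hG0]
    exact hGc.continuousWithinAt.tendsto
  exact hcont.congr' hkey

lemma integrableOn_hC_trunc (hb : 0 < p'.im) {ε : ℝ} (hε : 0 < ε) :
    IntegrableOn (hC p' x) {y : ℝ | ε < |x - y|} := by
  rw [truncSet_eq x ε hε]
  exact ((integrableOn_hC_Iic x hb (x - ε) (by linarith)).mono_set Iio_subset_Iic_self).union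
    (integrableOn_hC_Ioi x hb (x + ε) (by linarith))


lemma hval (p' : ℂ) (hb : 0 < p'.im) (x : ℝ) :
    (1/Real.pi) * (-((2/((x:ℂ)+p')^2) * (Real.pi * Complex.I))).im
      = 2*(p'.im^2 - (x+p'.re)^2)/(((x+p'.re)^2+p'.im^2)^2) := by
  have hden : ((x+p'.re)^2+p'.im^2) ≠ 0 := by positivity
  have h1 : (-((2/((x:ℂ)+p')^2) * ((Real.pi:ℂ) * Complex.I))).im
      = -(Real.pi * ((2:ℂ)/((x:ℂ)+p')^2).re) := by
    simp [Complex.mul_im, Complex.mul_re]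
    ring
  have h2 : ((2:ℂ)/((x:ℂ)+p')^2).re
      = 2 * ((((x:ℂ)+p')^2).re) / Complex.normSq (((x:ℂ)+p')^2) := by
    rw [div_eq_mul_inv]
    simp [Complex.inv_re]
    ring
  have h3 : (((x:ℂ)+p')^2).re = (x+p'.re)^2 - p'.im^2 := by
    simp [pow_two, Complex.mul_re]
  have h4 : Complex.normSq (((x:ℂ)+p')^2) = ((x+p'.re)^2+p'.im^2)^2 := by
    rw [map_pow]
    simp [Complex.normSq_apply]
    ring
  rw [h1, h2, h3, h4]
  have hpi : Real.pi ≠ 0 := Real.pi_ne_zero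
  field_simp
  ring

lemma pvHilbert_lorentz (hb : 0 < p'.im) (f : ℝ → ℝ)
    (hf : ∀ w, f w = -(4*p'.im*(w+p'.re))/(((w+p'.re)^2+p'.im^2)^2)) :
    pvHilbert f x = 2*(p'.im^2 - (x+p'.re)^2)/(((x+p'.re)^2+p'.im^2)^2) := by
  apply Filter.Tendsto.limUnder_eq
  have hkey : ∀ᶠ ε in 𝓝[>] (0:ℝ),
      (1/Real.pi) * (∫ y in {y : ℝ | ε < |x - y|}, hC p' x y).im
        = (1/Real.pi) * ∫ y in {y : ℝ | ε < |x - y|}, f y / (x - y) := by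
    filter_upwards [self_mem_nhdsWithin] with ε (hε : 0 < ε)
    congr 1
    rw [← RCLike.im_eq_complex_im, ← integral_im (integrableOn_hC_trunc x hb hε),
      RCLike.im_eq_complex_im]
    refine setIntegral_congr_fun ?_ fun w hw => ?_
    · exact (isOpen_lt continuous_const (by fun_prop)).measurableSet
    · have hwx : w ≠ x := by
        intro h
        subst h
        simp at hw
        linarith
      rw [im_hC p' hb x w hwx, hf w]
      ring_nf
  have htend : Tendsto
      (fun ε : ℝ => (1/Real.pi) * (∫ y in {y : ℝ | ε < |x - y|}, hC p' x y).im)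
      (𝓝[>] (0:ℝ))
      (𝓝 ((1/Real.pi) * (-((2/((x:ℂ)+p')^2) * (Real.pi * Complex.I))).im)) :=
    ((Complex.continuous_im.tendsto _).comp (tendsto_integral_trunc x hb)).const_mul _
  rw [hval p' hb x] at htend
  exact htend.congr' hkey


lemma abs_sq_add (r : ℝ) (p : ℂ) : ‖(r:ℂ) + p‖ ^ 2 = (r + p.re)^2 + p.im^2 := by
  rw [Complex.sq_norm, Complex.normSq_apply]
  simp
  ring

-- (i) time derivative
lemma deriv_time (p : ℂ) (hp : 0 < p.im) (x t : ℝ) :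
    HasDerivAt (fun s : ℝ => 2 * p.im / ((x - (1/p.im)*s + p.re)^2 + p.im^2))
      (4 * p.im * (1/p.im) * (x - (1/p.im)*t + p.re) / (((x - (1/p.im)*t + p.re)^2 + p.im^2)^2))
      t := by
  set c := 1/p.im
  have hz : HasDerivAt (fun s : ℝ => x - c*s + p.re) (-c) t := by
    simpa using (((hasDerivAt_id t).const_mul c).const_sub x).add_const p.re
  have hden : HasDerivAt (fun s : ℝ => (x - c*s + p.re)^2 + p.im^2)
      (2*(x - c*t + p.re)*(-c)) t := by
    simpa [pow_one] using ((hz.pow 2).add_const (p.im^2))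
  have hD : ((x - c*t + p.re)^2 + p.im^2) ≠ 0 := by positivity
  have := (hasDerivAt_const t (2*p.im)).div hden hD
  refine this.congr_deriv ?_
  field_simp
  ring

-- lorentzian space derivative
lemma deriv_lorentz (A b : ℝ) (hb : 0 < b) (w : ℝ) :
    HasDerivAt (fun v : ℝ => 2*b/((v+A)^2+b^2))
      (-(4*b*(w+A))/(((w+A)^2+b^2)^2)) w := by
  have hz : HasDerivAt (fun v : ℝ => v + A) 1 w := (hasDerivAt_id w).add_const A
  have hden : HasDerivAt (fun v : ℝ => (v+A)^2+b^2) (2*(w+A)) w := by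
    simpa [pow_one] using ((hz.pow 2).add_const (b^2))
  have hD : ((w+A)^2 + b^2) ≠ 0 := by positivity
  have := (hasDerivAt_const w (2*b)).div hden hD
  refine this.congr_deriv ?_
  field_simp
  ring

-- derivative of the Hilbert image
lemma deriv_gfun (A b : ℝ) (hb : 0 < b) (x : ℝ) :
    HasDerivAt (fun y : ℝ => 2*(b^2 - (y+A)^2)/(((y+A)^2+b^2)^2))
      ((4*(x+A)^3 - 12*(x+A)*b^2)/(((x+A)^2+b^2)^3)) x := by
  have hz : HasDerivAt (fun v : ℝ => v + A) 1 x := (hasDerivAt_id x).add_const A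
  have hnum : HasDerivAt (fun y : ℝ => 2*(b^2 - (y+A)^2)) (2*(-(2*(x+A)))) x := by
    simpa [pow_one] using (((hz.pow 2).const_sub (b^2)).const_mul 2)
  have hden : HasDerivAt (fun y : ℝ => (((y+A)^2+b^2)^2)) (2*((x+A)^2+b^2)*(2*(x+A))) x := by
    have h1 : HasDerivAt (fun y : ℝ => (y+A)^2+b^2) (2*(x+A)) x := by
      simpa [pow_one] using ((hz.pow 2).add_const (b^2))
    simpa [pow_one, Pi.pow_def] using (h1.pow 2)
  have hD : (((x+A)^2 + b^2)^2) ≠ 0 := by positivity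
  have := hnum.div hden hD
  refine this.congr_deriv ?_
  have hD1 : ((x+A)^2 + b^2) ≠ 0 := by positivity
  field_simp
  ring

-- derivative of u^2
lemma deriv_usq (A b : ℝ) (hb : 0 < b) (x : ℝ) :
    HasDerivAt (fun y : ℝ => (2*b/((y+A)^2+b^2))^2)
      (-(16*b^2*(x+A))/(((x+A)^2+b^2)^3)) x := by
  have h1 := (deriv_lorentz A b hb x).pow 2
  refine h1.congr_deriv ?_
  have hD1 : ((x+A)^2 + b^2) ≠ 0 := by positivity
  simp only [Nat.cast_ofNat, Nat.reduceSub, pow_one]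
  field_simp
  ring

end BOaux


open BOaux in
/-- For every `p` in the upper half-plane, the profile
`u(t,x) = 2 Im p / |x - c t + p|²` with `c = 1 / Im p` solves the Benjamin–Ono
equation `∂ₜ u - ∂ₓ |D| u + ∂ₓ (u²) = 0`, where `|D| = H ∂ₓ` with `H` the
Hilbert transform. -/
theorem benjaminOno_soliton (p : ℂ) (hp : 0 < p.im) :
    ∀ t x : ℝ,
      (deriv (fun s : ℝ =>
          2 * p.im / ‖(((x - (1 / p.im) * s : ℝ) : ℂ) + p)‖ ^ 2) t)
        - (deriv (fun y : ℝ =>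
            pvHilbert (fun w : ℝ => deriv (fun v : ℝ =>
              2 * p.im / ‖(((v - (1 / p.im) * t : ℝ) : ℂ) + p)‖ ^ 2) w) y) x)
        + (deriv (fun y : ℝ =>
            (2 * p.im / ‖(((y - (1 / p.im) * t : ℝ) : ℂ) + p)‖ ^ 2) ^ 2) x)
        = 0 := by
  intro t x
  set b := p.im with hbdef
  set c := (1/p.im : ℝ) with hcdef
  set A : ℝ := p.re - c*t with hAdef
  set p' : ℂ := p - ((c*t : ℝ) : ℂ) with hp'def
  have hre : p'.re = A := by simp [hp'def, hAdef]
  have him : p'.im = b := by simp [hp'def, hbdef]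
  have hb : 0 < b := hp
  -- term 1
  have e1 : (fun s : ℝ =>
        2 * p.im / ‖(((x - (1 / p.im) * s : ℝ) : ℂ) + p)‖ ^ 2)
      = fun s : ℝ => 2 * p.im / ((x - (1/p.im)*s + p.re)^2 + p.im^2) := by
    funext s
    rw [abs_sq_add]
  -- inner space derivative
  have hf : ∀ w : ℝ, deriv (fun v : ℝ =>
        2 * p.im / ‖(((v - (1 / p.im) * t : ℝ) : ℂ) + p)‖ ^ 2) w
      = -(4*p'.im*(w+p'.re))/(((w+p'.re)^2+p'.im^2)^2) := by
    intro w
    have efn : (fun v : ℝ =>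
          2 * p.im / ‖(((v - (1 / p.im) * t : ℝ) : ℂ) + p)‖ ^ 2)
        = fun v : ℝ => 2*b/((v+A)^2+b^2) := by
      funext v
      rw [abs_sq_add, show v - 1/p.im*t + p.re = v + A by rw [hAdef, hcdef]; ring, hbdef]
    rw [efn, (deriv_lorentz A b hb w).deriv, hre, him]
  -- term 2
  have e2 : (fun y : ℝ =>
        pvHilbert (fun w : ℝ => deriv (fun v : ℝ =>
          2 * p.im / ‖(((v - (1 / p.im) * t : ℝ) : ℂ) + p)‖ ^ 2) w) y)
      = fun y : ℝ => 2*(b^2 - (y+A)^2)/(((y+A)^2+b^2)^2) := by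
    funext y
    rw [pvHilbert_lorentz y (him ▸ hb) _ hf, hre, him]
  -- term 3
  have e3 : (fun y : ℝ =>
        (2 * p.im / ‖(((y - (1 / p.im) * t : ℝ) : ℂ) + p)‖ ^ 2) ^ 2)
      = fun y : ℝ => (2*b/((y+A)^2+b^2))^2 := by
    funext y
    rw [abs_sq_add, show y - 1/p.im*t + p.re = y + A by rw [hAdef, hcdef]; ring, hbdef]
  rw [e1, e2, e3, (deriv_time p hp x t).deriv, (deriv_gfun A b hb x).deriv,
    (deriv_usq A b hb x).deriv]
  have hz : x - 1/p.im*t + p.re = x + A := by rw [hAdef, hcdef]; ring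
  rw [hz]
  have hD : ((x+A)^2 + b^2) ≠ 0 := by positivity
  have hbne : b ≠ 0 := hb.ne'
  rw [← hbdef]
  field_simp
  ring
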